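/- Let X be a Hausdorff, locally compact, σ-compact, connected, locally connected space. The space of ends of X, topologized with basic open sets N(ε,K) = {β : β(K) = ε(K)} for compact K, is Hausdorff, compact, second-countable, and totally disconnected. -/

import Mathlib

open Set

/-- An *end* of a topological space `X`: a function assigning to each compact `K ⊆ X`
a connected component of `X \ K`, monotone under inclusion of compact sets. -/
structure SpaceEnd (X : Type*) [TopologicalSpace X] where
  part : ∀ K : Set X, IsCompact K → Set X
  part_mem : ∀ (K : Set X) (hK : IsCompact K), ∃ x ∈ Kᶜ, part K hK = connectedComponentIn Kᶜ x
  part_mono : ∀ (K₁ K₂ : Set X) (h₁ : IsCompact K₁) (h₂ : IsCompact K₂),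
    K₁ ⊆ K₂ → part K₂ h₂ ⊆ part K₁ h₁

/-- The topology on the set of ends, generated by the basic end-space neighborhoods
`N(ε,K) = {β : β(K) = ε(K)}`. -/
def endTopology (X : Type*) [TopologicalSpace X] : TopologicalSpace (SpaceEnd X) :=
  TopologicalSpace.generateFrom
    {S : Set (SpaceEnd X) | ∃ (ε : SpaceEnd X) (K : Set X) (hK : IsCompact K),
      S = {β : SpaceEnd X | β.part K hK = ε.part K hK}}

namespace SpaceEndAux

open TopologicalSpace Topology

variable {X : Type*} [TopologicalSpace X]

theorem ext' {β ε : SpaceEnd X} (h : β.part = ε.part) : β = ε := by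
  cases β; cases ε; cases h; rfl

theorem part_nonempty (ε : SpaceEnd X) (K : Set X) (hK : IsCompact K) :
    (ε.part K hK).Nonempty := by
  obtain ⟨x, hx, h⟩ := ε.part_mem K hK
  exact ⟨x, h ▸ mem_connectedComponentIn hx⟩

theorem part_subset (ε : SpaceEnd X) (K : Set X) (hK : IsCompact K) :
    ε.part K hK ⊆ Kᶜ := by
  obtain ⟨x, hx, h⟩ := ε.part_mem K hK
  exact h ▸ connectedComponentIn_subset _ _

/-- An end's value on a compact set is determined by its value on any larger compact set. -/
theorem part_eq_of_subset {β ε : SpaceEnd X} {K L : Set X} (hK : IsCompact K) (hL : IsCompact L)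
    (hKL : K ⊆ L) (h : β.part L hL = ε.part L hL) : β.part K hK = ε.part K hK := by
  obtain ⟨y, hy⟩ := part_nonempty β L hL
  obtain ⟨x, hx, hβ⟩ := β.part_mem K hK
  obtain ⟨x', hx', hε⟩ := ε.part_mem K hK
  have hyβ : y ∈ β.part K hK := β.part_mono K L hK hL hKL hy
  have hyε : y ∈ ε.part K hK := ε.part_mono K L hK hL hKL (h ▸ hy)
  rw [hβ] at hyβ ⊢
  rw [hε] at hyε ⊢
  rw [connectedComponentIn_eq hyβ, connectedComponentIn_eq hyε]

variable (E : CompactExhaustion X)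

/-- Basic neighborhood determined by level `n` of the exhaustion. -/
def nb (ε : SpaceEnd X) (n : ℕ) : Set (SpaceEnd X) :=
  {β : SpaceEnd X | β.part (E n) (E.isCompact n) = ε.part (E n) (E.isCompact n)}

theorem mem_nb_self (ε : SpaceEnd X) (n : ℕ) : ε ∈ nb E ε n := rfl

theorem nb_eq_of_mem {β ε : SpaceEnd X} {n : ℕ} (h : β ∈ nb E ε n) :
    nb E β n = nb E ε n := by
  ext γ
  simp only [nb, mem_setOf_eq] at h ⊢
  rw [h]

theorem nb_antitone {β ε : SpaceEnd X} {n m : ℕ} (hnm : n ≤ m) (h : β ∈ nb E ε m) :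
    β ∈ nb E ε n :=
  part_eq_of_subset (E.isCompact n) (E.isCompact m) (E.subset hnm) h

theorem isOpen_nb (ε : SpaceEnd X) (n : ℕ) : IsOpen[endTopology X] (nb E ε n) :=
  isOpen_generateFrom_of_mem ⟨ε, E n, E.isCompact n, rfl⟩

/-- The end topology is generated by the countable family of basic sets from the exhaustion. -/
theorem endTopology_eq :
    endTopology X = TopologicalSpace.generateFrom
      {S : Set (SpaceEnd X) | ∃ (ε : SpaceEnd X) (n : ℕ), S = nb E ε n} := by
  apply le_antisymm
  · rw [le_generateFrom_iff_subset_isOpen]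
    rintro S ⟨ε, n, rfl⟩
    exact isOpen_nb E ε n
  · letI := TopologicalSpace.generateFrom
      {S : Set (SpaceEnd X) | ∃ (ε : SpaceEnd X) (n : ℕ), S = nb E ε n}
    rw [endTopology, le_generateFrom_iff_subset_isOpen]
    rintro S ⟨ε, K, hK, rfl⟩
    obtain ⟨n, hn⟩ := E.exists_superset_of_isCompact hK
    have : {β : SpaceEnd X | β.part K hK = ε.part K hK}
        = ⋃ β ∈ {β : SpaceEnd X | β.part K hK = ε.part K hK}, nb E β n := by
      ext γ
      simp only [mem_iUnion, mem_setOf_eq]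
      constructor
      · intro h
        exact ⟨γ, h, mem_nb_self E γ n⟩
      · rintro ⟨β, hβ, hγ⟩
        exact (part_eq_of_subset hK (E.isCompact n) hn hγ).trans hβ
    rw [this]
    exact isOpen_biUnion fun β _ => isOpen_generateFrom_of_mem
      (g := {S : Set (SpaceEnd X) | ∃ (ε : SpaceEnd X) (n : ℕ), S = nb E ε n}) ⟨β, n, rfl⟩

theorem isClosed_nb (ε : SpaceEnd X) (n : ℕ) : IsClosed[endTopology X] (nb E ε n) := by
  letI := endTopology X
  rw [← isOpen_compl_iff]
  have : (nb E ε n)ᶜ = ⋃ β ∈ (nb E ε n)ᶜ, nb E β n := by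
    ext γ
    simp only [mem_iUnion]
    constructor
    · intro h
      exact ⟨γ, h, mem_nb_self E γ n⟩
    · rintro ⟨β, hβ, hγ⟩ hγε
      exact hβ (hγ.symm.trans hγε)
  rw [this]
  exact isOpen_biUnion fun β _ => isOpen_nb E β n

/-- A preconnected set meeting both `t` and `tᶜ` meets the frontier of `t`. -/
theorem meets_frontier {α : Type*} [TopologicalSpace α] {s t : Set α} (hs : IsPreconnected s)
    (h1 : (s ∩ t).Nonempty) (h2 : (s \ t).Nonempty) : (s ∩ frontier t).Nonempty := by
  by_contra h
  rw [not_nonempty_iff_eq_empty] at h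
  have hmem : ∀ y ∈ s, y ∉ frontier t := fun y hy hf =>
    (eq_empty_iff_forall_notMem.1 h y) ⟨hy, hf⟩
  have hsub : s ⊆ interior t ∪ (closure t)ᶜ := by
    intro y hy
    by_cases hyt : y ∈ closure t
    · exact Or.inl (by_contra fun h' => hmem y hy ⟨hyt, h'⟩)
    · exact Or.inr hyt
  obtain ⟨y1, hy1s, hy1t⟩ := h1
  obtain ⟨y2, hy2s, hy2t⟩ := h2
  have hy1 : y1 ∈ interior t := by
    by_contra h'
    exact hmem y1 hy1s ⟨subset_closure hy1t, h'⟩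
  have hy2 : y2 ∈ (closure t)ᶜ := by
    intro h'
    exact hmem y2 hy2s ⟨h', fun h'' => hy2t (interior_subset h'')⟩
  obtain ⟨z, _, hz1, hz2⟩ := hs (interior t) (closure t)ᶜ isOpen_interior
    isClosed_closure.isOpen_compl hsub ⟨y1, hy1s, hy1⟩ ⟨y2, hy2s, hy2⟩
  exact hz2 (subset_closure (interior_subset hz1))

/-- Finiteness of the set of possible values of ends at a level of the exhaustion. -/
theorem finite_parts [T2Space X] [ConnectedSpace X] [LocallyConnectedSpace X] (n : ℕ) :
    {C : Set X | ∃ ε : SpaceEnd X, ε.part (E n) (E.isCompact n) = C}.Finite := by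
  have hKc : IsCompact (E n) := E.isCompact n
  have hLc : IsCompact (E (n + 1)) := E.isCompact (n + 1)
  have hKL : E n ⊆ interior (E (n + 1)) := E.subset_interior_succ n
  have hKcopen : IsOpen (E n)ᶜ := hKc.isClosed.isOpen_compl
  have hFc : IsCompact (frontier (E (n + 1))) :=
    hLc.of_isClosed_subset isClosed_frontier hLc.isClosed.frontier_subset
  have hFK : frontier (E (n + 1)) ⊆ (E n)ᶜ := fun y hy hyK => hy.2 (hKL hyK)
  obtain ⟨b, hbF, hbfin, hbcov⟩ := hFc.elim_finite_subcover_image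
    (b := frontier (E (n + 1))) (c := fun z => connectedComponentIn (E n)ᶜ z)
    (fun z _ => hKcopen.connectedComponentIn)
    (fun z hz => mem_biUnion hz (mem_connectedComponentIn (hFK hz)))
  apply (((hbfin.image (fun z => connectedComponentIn (E n)ᶜ z)).insert univ)).subset
  rintro C ⟨ε, rfl⟩
  obtain ⟨x₀, hx₀, hC⟩ := ε.part_mem (E n) hKc
  have hCconn : IsPreconnected (ε.part (E n) hKc) := by
    rw [hC]
    exact (isConnected_connectedComponentIn_iff.2 hx₀).isPreconnected
  obtain ⟨y₀, hy₀⟩ := part_nonempty ε (E (n + 1)) hLc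
  have hy₀C : y₀ ∈ ε.part (E n) hKc :=
    ε.part_mono (E n) (E (n + 1)) hKc hLc (E.subset n.le_succ) hy₀
  have hy₀L : y₀ ∉ E (n + 1) := part_subset ε (E (n + 1)) hLc hy₀
  by_cases hmeet : (ε.part (E n) hKc ∩ E (n + 1)).Nonempty
  · -- the part meets the frontier, hence equals one of finitely many components
    obtain ⟨y, hyC, hyF⟩ := meets_frontier hCconn hmeet ⟨y₀, hy₀C, hy₀L⟩
    obtain ⟨z, hzb, hzcc⟩ := mem_iUnion₂.1 (hbcov hyF)
    refine Or.inr ⟨z, hzb, ?_⟩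
    have h1 : ε.part (E n) hKc = connectedComponentIn (E n)ᶜ y := by
      rw [hC]
      exact connectedComponentIn_eq (hC ▸ hyC)
    rw [h1]
    exact connectedComponentIn_eq hzcc
  · -- the part is clopen, hence the whole space
    left
    have hCL : ε.part (E n) hKc ∩ E (n + 1) = ∅ := not_nonempty_iff_eq_empty.1 hmeet
    have hopen : IsOpen (ε.part (E n) hKc) := by
      rw [hC]; exact hKcopen.connectedComponentIn
    have hclosed : IsClosed (ε.part (E n) hKc) := by
      refine isClosed_of_closure_subset ?_
      intro y hy
      have hyint : y ∉ interior (E (n + 1)) := by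
        intro hyi
        obtain ⟨z, hz1, hz2⟩ := mem_closure_iff.1 hy _ isOpen_interior hyi
        have hmem : z ∈ ε.part (E n) hKc ∩ E (n + 1) := ⟨hz2, interior_subset hz1⟩
        rw [hCL] at hmem
        exact absurd hmem (Set.notMem_empty z)
      have hyK : y ∈ (E n)ᶜ := fun hyK => hyint (hKL hyK)
      obtain ⟨z, hz1, hz2⟩ := mem_closure_iff.1 hy _
        (hKcopen.connectedComponentIn (x := y)) (mem_connectedComponentIn hyK)
      have h1 : connectedComponentIn (E n)ᶜ y = connectedComponentIn (E n)ᶜ z :=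
        connectedComponentIn_eq hz1
      have h2 : ε.part (E n) hKc = connectedComponentIn (E n)ᶜ z := by
        rw [hC]; exact connectedComponentIn_eq (hC ▸ hz2)
      rw [h2, ← h1]
      exact mem_connectedComponentIn hyK
    exact IsClopen.eq_univ ⟨hclosed, hopen⟩ ⟨y₀, hy₀C⟩

theorem finite_nbs [T2Space X] [ConnectedSpace X] [LocallyConnectedSpace X] (n : ℕ) :
    {S : Set (SpaceEnd X) | ∃ ε : SpaceEnd X, S = nb E ε n}.Finite := by
  have h := (finite_parts E n).image
    (fun C => {β : SpaceEnd X | β.part (E n) (E.isCompact n) = C})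
  apply h.subset
  rintro S ⟨ε, rfl⟩
  exact ⟨ε.part (E n) (E.isCompact n), ⟨ε, rfl⟩, rfl⟩

theorem isBasis :
    @TopologicalSpace.IsTopologicalBasis (SpaceEnd X) (endTopology X)
      {S : Set (SpaceEnd X) | ∃ (ε : SpaceEnd X) (n : ℕ), S = nb E ε n} := by
  letI := endTopology X
  refine ⟨?_, ?_, endTopology_eq E⟩
  · rintro t₁ ⟨ε₁, n₁, rfl⟩ t₂ ⟨ε₂, n₂, rfl⟩ β ⟨h₁, h₂⟩
    refine ⟨nb E β (max n₁ n₂), ⟨β, max n₁ n₂, rfl⟩, mem_nb_self E β _, ?_⟩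
    intro γ hγ
    have hγ₁ : γ ∈ nb E β n₁ := nb_antitone E (le_max_left _ _) hγ
    have hγ₂ : γ ∈ nb E β n₂ := nb_antitone E (le_max_right _ _) hγ
    exact ⟨hγ₁.trans h₁, hγ₂.trans h₂⟩
  · apply eq_univ_of_forall
    intro β
    exact ⟨nb E β 0, ⟨β, 0, rfl⟩, mem_nb_self E β 0⟩

theorem exists_level_ne {β ε : SpaceEnd X} (h : β ≠ ε) :
    ∃ n, β ∉ nb E ε n := by
  by_contra h'
  push_neg at h'
  apply h
  apply ext'
  funext K hK
  obtain ⟨n, hn⟩ := E.exists_superset_of_isCompact hK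
  exact part_eq_of_subset hK (E.isCompact n) hn (h' n)

end SpaceEndAux

open SpaceEndAux TopologicalSpace Topology

/-- The space of ends is Hausdorff, compact, second countable, and totally disconnected. -/
theorem stmt10 (X : Type*) [TopologicalSpace X] [T2Space X] [LocallyCompactSpace X]
    [SigmaCompactSpace X] [ConnectedSpace X] [LocallyConnectedSpace X] :
    @T2Space (SpaceEnd X) (endTopology X) ∧
    @CompactSpace (SpaceEnd X) (endTopology X) ∧
    @SecondCountableTopology (SpaceEnd X) (endTopology X) ∧
    @TotallyDisconnectedSpace (SpaceEnd X) (endTopology X) := by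
  letI tE := endTopology X
  set E : CompactExhaustion X := CompactExhaustion.choice X with hE
  refine ⟨?_, ?_, ?_, ?_⟩
  · -- T2
    constructor
    intro β ε h
    obtain ⟨n, hn⟩ := exists_level_ne E h
    refine ⟨nb E β n, nb E ε n, isOpen_nb E β n, isOpen_nb E ε n,
      mem_nb_self E β n, mem_nb_self E ε n, ?_⟩
    rw [Set.disjoint_left]
    intro γ hγβ hγε
    exact hn (hγβ.symm.trans hγε)
  · -- Compact
    constructor
    rw [isCompact_iff_ultrafilter_le_nhds]
    intro f _
    -- choose for each level a basic set belonging to the ultrafilter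
    have hsel : ∀ n : ℕ, ∃ ε : SpaceEnd X, nb E ε n ∈ f := by
      intro n
      have huniv : ⋃₀ {S : Set (SpaceEnd X) | ∃ ε, S = nb E ε n} ∈ f := by
        have : ⋃₀ {S : Set (SpaceEnd X) | ∃ ε, S = nb E ε n} = Set.univ :=
          Set.eq_univ_of_forall fun β => ⟨nb E β n, ⟨β, rfl⟩, mem_nb_self E β n⟩
        rw [this]
        exact Filter.univ_mem
      obtain ⟨S, ⟨ε, rfl⟩, hS⟩ := (Ultrafilter.finite_sUnion_mem_iff (finite_nbs E n)).1 huniv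
      exact ⟨ε, hS⟩
    choose ε hε using hsel
    -- compatibility of the chosen ends
    have hcompat : ∀ {n m : ℕ}, n ≤ m →
        (ε m).part (E n) (E.isCompact n) = (ε n).part (E n) (E.isCompact n) := by
      intro n m hnm
      obtain ⟨γ, hγm, hγn⟩ :=
        Ultrafilter.nonempty_of_mem (Filter.inter_mem (hε m) (hε n))
      exact (nb_antitone E hnm hγm).symm.trans hγn
    -- representative points
    have hx : ∀ n : ℕ, ((ε n).part (E n) (E.isCompact n)).Nonempty :=
      fun n => part_nonempty _ _ _
    choose x hxmem using hx
    have hxK : ∀ n, x n ∈ (E n)ᶜ := fun n => part_subset _ _ _ (hxmem n)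
    have hpart_eq : ∀ n, (ε n).part (E n) (E.isCompact n)
        = connectedComponentIn (E n)ᶜ (x n) := by
      intro n
      obtain ⟨z, hz, hzeq⟩ := (ε n).part_mem (E n) (E.isCompact n)
      rw [hzeq]
      exact connectedComponentIn_eq (hzeq ▸ hxmem n)
    have hxin : ∀ {n m : ℕ}, n ≤ m → x m ∈ (ε n).part (E n) (E.isCompact n) := by
      intro n m hnm
      have h := (ε m).part_mono (E n) (E m) (E.isCompact n) (E.isCompact m)
        (E.subset hnm) (hxmem m)
      rwa [hcompat hnm] at h
    -- choice of level does not matter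
    have hQ : ∀ (K : Set X) (n m : ℕ), K ⊆ E n → n ≤ m →
        connectedComponentIn Kᶜ (x m) = connectedComponentIn Kᶜ (x n) := by
      intro K n m hKn hnm
      have h1 : x m ∈ connectedComponentIn Kᶜ (x n) := by
        apply connectedComponentIn_mono (x n) (compl_subset_compl.2 hKn)
        rw [← hpart_eq n]
        exact hxin hnm
      exact (connectedComponentIn_eq h1).symm
    have hQ' : ∀ (K : Set X) (n m : ℕ), K ⊆ E n → K ⊆ E m →
        connectedComponentIn Kᶜ (x m) = connectedComponentIn Kᶜ (x n) := by
      intro K n m hKn hKm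
      rw [← hQ K m (max n m) hKm (le_max_right n m)]
      exact hQ K n (max n m) hKn (le_max_left n m)
    -- the limit end
    have hnOf : ∀ (K : Set X), IsCompact K → ∃ p : ℕ, K ⊆ E p :=
      fun K hK => E.exists_superset_of_isCompact hK
    choose nOf hnOf_spec using hnOf
    refine ⟨⟨fun K hK => connectedComponentIn Kᶜ (x (nOf K hK)), ?_, ?_⟩, trivial, ?_⟩
    · intro K hK
      exact ⟨x (nOf K hK),
        fun hmem => hxK (nOf K hK) (hnOf_spec K hK hmem), rfl⟩
    · intro K₁ K₂ h₁ h₂ h12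
      have hK₂p : K₂ ⊆ E (max (nOf K₁ h₁) (nOf K₂ h₂)) :=
        (hnOf_spec K₂ h₂).trans (E.subset (le_max_right _ _))
      have hK₁p : K₁ ⊆ E (max (nOf K₁ h₁) (nOf K₂ h₂)) := h12.trans hK₂p
      calc connectedComponentIn K₂ᶜ (x (nOf K₂ h₂))
          = connectedComponentIn K₂ᶜ (x (max (nOf K₁ h₁) (nOf K₂ h₂))) :=
            (hQ' K₂ (nOf K₂ h₂) _ (hnOf_spec K₂ h₂) hK₂p).symm
        _ ⊆ connectedComponentIn K₁ᶜ (x (max (nOf K₁ h₁) (nOf K₂ h₂))) :=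
            connectedComponentIn_mono _ (Set.compl_subset_compl.2 h12)
        _ = connectedComponentIn K₁ᶜ (x (nOf K₁ h₁)) :=
            hQ' K₁ (nOf K₁ h₁) _ (hnOf_spec K₁ h₁) hK₁p
    · -- convergence of the ultrafilter to the limit end
      set ω : SpaceEnd X := ⟨fun K hK => connectedComponentIn Kᶜ (x (nOf K hK)), _, _⟩ with hω
      have hωlevel : ∀ p : ℕ, ω.part (E p) (E.isCompact p)
          = (ε p).part (E p) (E.isCompact p) := by
        intro p
        show connectedComponentIn (E p)ᶜ (x (nOf (E p) (E.isCompact p)))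
          = (ε p).part (E p) (E.isCompact p)
        rw [hpart_eq p]
        exact hQ' (E p) p (nOf (E p) (E.isCompact p)) subset_rfl
          (hnOf_spec (E p) (E.isCompact p))
      have key : ∀ (δ : SpaceEnd X) (K : Set X) (hK : IsCompact K),
          ω ∈ {β : SpaceEnd X | β.part K hK = δ.part K hK} →
          {β : SpaceEnd X | β.part K hK = δ.part K hK} ∈ f := by
        intro δ K hK hmem
        apply Filter.mem_of_superset (hε (nOf K hK))
        intro β hβ
        have h1 : β.part (E (nOf K hK)) (E.isCompact _)
            = ω.part (E (nOf K hK)) (E.isCompact _) :=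
          hβ.trans (hωlevel (nOf K hK)).symm
        have h2 : β.part K hK = ω.part K hK :=
          part_eq_of_subset hK (E.isCompact _) (hnOf_spec K hK) h1
        exact h2.trans hmem
      have : (↑f : Filter (SpaceEnd X)) ≤
          ⨅ s ∈ {s | ω ∈ s ∧ s ∈ {S : Set (SpaceEnd X) |
            ∃ (δ : SpaceEnd X) (K : Set X) (hK : IsCompact K),
              S = {β : SpaceEnd X | β.part K hK = δ.part K hK}}}, Filter.principal s := by
        refine le_iInf₂ fun s hs => Filter.le_principal_iff.2 ?_
        obtain ⟨hωs, δ, K, hK, rfl⟩ := hs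
        exact key δ K hK hωs
      exact this.trans (le_of_eq (TopologicalSpace.nhds_generateFrom).symm)
  · -- Second countable
    refine (isBasis E).secondCountableTopology ?_
    have : {S : Set (SpaceEnd X) | ∃ (ε : SpaceEnd X) (n : ℕ), S = nb E ε n}
        = ⋃ n : ℕ, {S : Set (SpaceEnd X) | ∃ ε : SpaceEnd X, S = nb E ε n} := by
      ext S
      simp only [Set.mem_iUnion, Set.mem_setOf_eq]
      exact ⟨fun ⟨ε, n, h⟩ => ⟨n, ε, h⟩, fun ⟨n, ε, h⟩ => ⟨ε, n, h⟩⟩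
    rw [this]
    exact Set.countable_iUnion fun n => (finite_nbs E n).countable
  · -- Totally disconnected
    constructor
    refine isTotallyDisconnected_of_isTotallySeparated
      (@TotallySeparatedSpace.isTotallySeparated_univ _ _ (totallySeparatedSpace_iff_exists_isClopen.2 ?_))
    intro β ε h
    obtain ⟨n, hn⟩ := exists_level_ne E (Ne.symm h)
    exact ⟨nb E β n, ⟨isClosed_nb E β n, isOpen_nb E β n⟩, mem_nb_self E β n, hn⟩
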